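/- Let $A$ be a unital C*-algebra, let $G$ be a finite group, and let $\alpha: G \to \mathrm{Aut}(A)$ be a strictly approximately inner action. Then for every finite set $F \subset C^*(G, A, \alpha)$ and every $\varepsilon > 0$, there exists a unital surjective linear map $\psi: C^*(G, A, \alpha) \to A$ such that: (1) $\|\psi\| \leq \mathrm{card}(G)$; (2) $\psi(a) = a$ for all $a \in A$; (3) $\|\psi(xyz^*) - \psi(x)\psi(y)\psi(z)^*\| < \varepsilon$ for all $x, y, z \in F$. -/

import Mathlib

open scoped BigOperators

/-- A realization of the crossed product `C*(G, A, α)` of a finite group action: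
a C*-algebra `B` together with an isometric unital *-homomorphism `ι : A → B` and
implementing unitaries `u g` such that every element of `B` is a sum `∑ g, ι(a_g) u_g`
and the coefficients are norm-controlled by the whole sum. -/
structure CrossedProduct (G : Type*) [Group G] [Fintype G]
    (A B : Type*) [CStarAlgebra A] [CStarAlgebra B] (α : G → A → A) where
  ι : A →⋆ₐ[ℂ] B
  u : G → B
  u_mul : ∀ g h : G, u g * u h = u (g * h)
  u_star : ∀ g : G, star (u g) = u g⁻¹
  u_one : u 1 = 1
  ι_isometry : ∀ a : A, ‖ι a‖ = ‖a‖
  covariant : ∀ (g : G) (a : A), u g * ι a * star (u g) = ι (α g a)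
  spans : ∀ b : B, ∃ f : G → A, b = ∑ g : G, ι (f g) * u g
  coeff_norm_le : ∀ (f : G → A) (g : G), ‖f g‖ ≤ ‖∑ h : G, ι (f h) * u h‖

/-- Strict approximate innerness of an action of a finite group on a unital C*-algebra:
for every finite set and tolerance there is a group homomorphism into the unitary group
approximately implementing the action. -/
def StrictlyApproxInner {G : Type*} [Group G] {A : Type*} [CStarAlgebra A]
    (α : G → A → A) : Prop :=
  ∀ (F : Finset A) (ε : ℝ), 0 < ε → ∃ z : G →* unitary A,
    ∀ g : G, ∀ a ∈ F, ‖α g a - (z g : A) * a * star ((z g : A))‖ < ε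

section Helpers

variable {G : Type*} [Group G] [Fintype G] {A B : Type*} [CStarAlgebra A] [CStarAlgebra B]
  {α : G → A → A} (cp : CrossedProduct G A B α)

lemma CrossedProduct.star_u_mul_self (g : G) : star (cp.u g) * cp.u g = 1 := by
  rw [cp.u_star, cp.u_mul, inv_mul_cancel, cp.u_one]

lemma CrossedProduct.u_mul_ι (g : G) (a : A) :
    cp.u g * cp.ι a = cp.ι (α g a) * cp.u g := by
  calc cp.u g * cp.ι a = cp.u g * cp.ι a * (star (cp.u g) * cp.u g) := by
        rw [cp.star_u_mul_self, mul_one]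
    _ = (cp.u g * cp.ι a * star (cp.u g)) * cp.u g := by
        rw [mul_assoc (cp.u g * cp.ι a)]
    _ = cp.ι (α g a) * cp.u g := by rw [cp.covariant]

lemma CrossedProduct.mul_single (a b : A) (g h : G) :
    (cp.ι a * cp.u g) * (cp.ι b * cp.u h) = cp.ι (a * α g b) * cp.u (g * h) := by
  calc (cp.ι a * cp.u g) * (cp.ι b * cp.u h)
      = cp.ι a * (cp.u g * cp.ι b) * cp.u h := by noncomm_ring
    _ = cp.ι a * (cp.ι (α g b) * cp.u g) * cp.u h := by rw [cp.u_mul_ι]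
    _ = (cp.ι a * cp.ι (α g b)) * (cp.u g * cp.u h) := by noncomm_ring
    _ = cp.ι (a * α g b) * cp.u (g * h) := by rw [map_mul, cp.u_mul]

lemma CrossedProduct.star_single (a : A) (g : G) :
    star (cp.ι a * cp.u g) = cp.ι (α g⁻¹ (star a)) * cp.u g⁻¹ := by
  rw [star_mul, cp.u_star, ← map_star]
  exact cp.u_mul_ι g⁻¹ (star a)

end Helpers

/-- Let `α : G → Aut(A)` be a strictly approximately inner action of a finite
group on a unital C*-algebra.  Then for every finite `F ⊆ C*(G,A,α)` and `ε > 0` there is a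
unital surjective linear map `ψ : C*(G,A,α) → A` with `‖ψ‖ ≤ card G`, `ψ(a) = a` for `a ∈ A`,
and `‖ψ(xyz*) - ψ(x)ψ(y)ψ(z)*‖ < ε` for `x, y, z ∈ F`. -/
theorem exists_approx_multiplicative_expectation
    {G : Type*} [Group G] [Fintype G] {A B : Type*} [CStarAlgebra A] [CStarAlgebra B]
    (α : G → (A ≃⋆ₐ[ℂ] A))
    (hα : ∀ (g h : G) (a : A), α (g * h) a = α g (α h a))
    (cp : CrossedProduct G A B (fun g a => α g a))
    (hsai : StrictlyApproxInner (fun g a => α g a))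
    (F : Finset B) (ε : ℝ) (hε : 0 < ε) :
    ∃ ψ : B →ₗ[ℂ] A,
      ψ 1 = 1 ∧
      Function.Surjective ψ ∧
      (∀ x : B, ‖ψ x‖ ≤ (Fintype.card G : ℝ) * ‖x‖) ∧
      (∀ a : A, ψ (cp.ι a) = a) ∧
      (∀ x ∈ F, ∀ y ∈ F, ∀ z ∈ F,
        ‖ψ (x * y * star z) - ψ x * ψ y * star (ψ z)‖ < ε) := by
  classical
  choose E hE using cp.spans
  -- uniqueness of coefficients
  have huniq : ∀ (f : G → A) (b : B), b = ∑ g : G, cp.ι (f g) * cp.u g → f = E b := by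
    intro f b hb
    funext g
    have h0 : ∑ h : G, cp.ι (f h - E b h) * cp.u h = 0 := by
      simp only [map_sub, sub_mul, Finset.sum_sub_distrib]
      rw [← hb, ← hE b, sub_self]
    have h1 := cp.coeff_norm_le (fun h => f h - E b h) g
    rw [h0, norm_zero] at h1
    exact sub_eq_zero.mp (norm_le_zero_iff.mp h1)
  have hEadd : ∀ x y : B, E (x + y) = fun g => E x g + E y g := by
    intro x y
    refine (huniq _ _ ?_).symm
    simp only [map_add, add_mul, Finset.sum_add_distrib]
    rw [← hE x, ← hE y]
  have hEsmul : ∀ (s : ℂ) (x : B), E (s • x) = fun g => s • E x g := by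
    intro s x
    refine (huniq _ _ ?_).symm
    simp only [map_smul, smul_mul_assoc, ← Finset.smul_sum]
    rw [← hE x]
  have hEle : ∀ (b : B) (g : G), ‖E b g‖ ≤ ‖b‖ := by
    intro b g
    have := cp.coeff_norm_le (E b) g
    rwa [← hE b] at this
  -- constants
  set n3 : ℝ := ((Fintype.card G : ℝ)) ^ 3 with hn3def
  have hcard : (0:ℝ) < (Fintype.card G : ℝ) := by exact_mod_cast Fintype.card_pos
  have hn3 : 0 < n3 := by positivity
  set M : ℝ := 1 + ∑ b ∈ F, ‖b‖ with hMdef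
  have hM1 : 1 ≤ M := by
    have : (0:ℝ) ≤ ∑ b ∈ F, ‖b‖ := Finset.sum_nonneg fun b _ => norm_nonneg b
    simp only [hMdef]; linarith
  have hM0 : 0 ≤ M := by linarith
  have hMb : ∀ x ∈ F, ‖x‖ ≤ M := by
    intro x hx
    have := Finset.single_le_sum (f := fun b : B => ‖b‖) (fun i _ => norm_nonneg i) hx
    simp only [hMdef]; linarith
  set ε' : ℝ := min 1 (ε / (4 * n3 * (M + 1) ^ 2)) with hε'def
  have hD : (0:ℝ) < 4 * n3 * (M + 1) ^ 2 := by positivity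
  have hε'pos : 0 < ε' := lt_min one_pos (div_pos hε hD)
  have hε'le1 : ε' ≤ 1 := min_le_left _ _
  have hε'leδ : ε' ≤ ε / (4 * n3 * (M + 1) ^ 2) := min_le_right _ _
  clear_value n3 M ε'
  -- the finite set in A
  set F₀ : Finset A :=
      ((F ×ˢ (Finset.univ : Finset G)).image fun p => E p.1 p.2) ∪
      ((F ×ˢ (Finset.univ : Finset G)).image fun p => star (E p.1 p.2)) with hF₀def
  have hmem₁ : ∀ y ∈ F, ∀ h : G, E y h ∈ F₀ := by
    intro y hy h
    refine Finset.mem_union_left _ (Finset.mem_image.mpr ⟨(y, h), ?_, rfl⟩)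
    simp [hy]
  have hmem₂ : ∀ y ∈ F, ∀ h : G, star (E y h) ∈ F₀ := by
    intro y hy h
    refine Finset.mem_union_right _ (Finset.mem_image.mpr ⟨(y, h), ?_, rfl⟩)
    simp [hy]
  obtain ⟨w, hw⟩ := hsai F₀ ε' hε'pos
  set v : G → A := fun g => ((w g : A)) with hvdef
  have hw' : ∀ (g : G), ∀ a ∈ F₀, ‖α g a - v g * a * star (v g)‖ < ε' := by
    intro g a ha
    simpa using hw g a ha
  have hv_mul : ∀ p q : G, v (p * q) = v p * v q := by
    intro p q
    simp only [hvdef, map_mul, MulMemClass.coe_mul]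
  have hv_star : ∀ p : G, star (v p) = v p⁻¹ := by
    intro p
    simp only [hvdef]
    rw [← Unitary.coe_star, Unitary.star_eq_inv, ← map_inv]
  have hv_one : v 1 = 1 := by simp [hvdef]
  have hv_comp : ∀ (p q : G) (x : A), v p * (v q * x) = v (p * q) * x := by
    intro p q x
    rw [hv_mul, mul_assoc]
  have hv1 : ∀ g : G, ‖v g‖ ≤ 1 := by
    have hone : ‖(1:A)‖ ≤ 1 := by
      have h := CStarRing.norm_star_mul_self (x := (1:A))
      simp only [star_one, one_mul] at h
      nlinarith [norm_nonneg (1:A)]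
    intro g
    have h2 : ‖v g‖ * ‖v g‖ ≤ 1 := by
      rw [← CStarRing.norm_star_mul_self (x := v g),
        show star (v g) * v g = (1:A) from Unitary.coe_star_mul_self (w g)]
      exact hone
    nlinarith [norm_nonneg (v g)]
  -- the map ψ
  let ψ : B →ₗ[ℂ] A :=
    { toFun := fun b => ∑ g : G, E b g * v g
      map_add' := fun x y => by
        show ∑ g : G, E (x + y) g * v g = (∑ g : G, E x g * v g) + ∑ g : G, E y g * v g
        rw [hEadd]
        simp [add_mul, Finset.sum_add_distrib]
      map_smul' := fun s x => by
        show ∑ g : G, E (s • x) g * v g = (RingHom.id ℂ) s • ∑ g : G, E x g * v g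
        rw [hEsmul]
        simp [smul_mul_assoc, Finset.smul_sum] }
  have hψdef : ∀ b : B, ψ b = ∑ g : G, E b g * v g := fun _ => rfl
  have hψ_single : ∀ (a : A) (g : G), ψ (cp.ι a * cp.u g) = a * v g := by
    intro a g
    have hs : ∑ h : G, cp.ι (if h = g then a else 0) * cp.u h = cp.ι a * cp.u g := by
      simp only [apply_ite cp.ι, map_zero, ite_mul, zero_mul]
      simp
    have hEeq := huniq (fun h => if h = g then a else 0) _ hs.symm
    rw [hψdef, ← hEeq]
    simp only [ite_mul, zero_mul]
    simp
  have hψι : ∀ a : A, ψ (cp.ι a) = a := by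
    intro a
    have h1 : cp.ι a = cp.ι a * cp.u 1 := by rw [cp.u_one, mul_one]
    rw [h1, hψ_single, hv_one, mul_one]
  refine ⟨ψ, ?_, fun a => ⟨cp.ι a, hψι a⟩, ?_, hψι, ?_⟩
  · rw [show (1:B) = cp.ι 1 from (map_one cp.ι).symm, hψι]
  · intro x
    calc ‖ψ x‖ ≤ ∑ g : G, ‖E x g * v g‖ := by rw [hψdef]; exact norm_sum_le _ _
      _ ≤ ∑ _g : G, ‖x‖ := by
          refine Finset.sum_le_sum fun g _ => le_trans (norm_mul_le _ _) ?_
          calc ‖E x g‖ * ‖v g‖ ≤ ‖x‖ * 1 :=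
                mul_le_mul (hEle x g) (hv1 g) (norm_nonneg _) (norm_nonneg _)
            _ = ‖x‖ := mul_one _
      _ = (Fintype.card G : ℝ) * ‖x‖ := by
          simp [Finset.sum_const, Finset.card_univ, nsmul_eq_mul]
  -- main estimate
  intro x hx y hy z hz
  have hstz : star z = ∑ k : G, cp.ι (α k⁻¹ (star (E z k))) * cp.u k⁻¹ := by
    conv_lhs => rw [hE z]
    rw [star_sum]
    exact Finset.sum_congr rfl fun k _ => cp.star_single _ _
  have hprod : x * y * star z = ∑ k : G, ∑ h : G, ∑ g : G,
      cp.ι (E x g * α g (E y h) * α (g * h * k⁻¹) (star (E z k))) * cp.u (g * h * k⁻¹) := by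
    conv_lhs => rw [hE x, hE y, hstz]
    simp only [Finset.sum_mul, Finset.mul_sum]
    refine Finset.sum_congr rfl fun k _ => Finset.sum_congr rfl fun h _ =>
      Finset.sum_congr rfl fun g _ => ?_
    rw [cp.mul_single, cp.mul_single]
    rw [show α (g * h * k⁻¹) (star (E z k)) = α (g * h) (α k⁻¹ (star (E z k))) from
      hα (g * h) k⁻¹ (star (E z k))]
  have hψL : ψ (x * y * star z) = ∑ k : G, ∑ h : G, ∑ g : G,
      E x g * α g (E y h) * α (g * h * k⁻¹) (star (E z k)) * v (g * h * k⁻¹) := by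
    rw [hprod]
    simp only [map_sum]
    exact Finset.sum_congr rfl fun k _ => Finset.sum_congr rfl fun h _ =>
      Finset.sum_congr rfl fun g _ => hψ_single _ _
  have hψR : ψ x * ψ y * star (ψ z) = ∑ k : G, ∑ h : G, ∑ g : G,
      E x g * v g * (E y h * v h) * (star (v k) * star (E z k)) := by
    rw [hψdef x, hψdef y, hψdef z, star_sum]
    simp only [star_mul, Finset.sum_mul, Finset.mul_sum]
  set C : ℝ := M * (ε' * (M + ε') + M * ε') with hCdef
  clear_value C
  have key : ∀ g h k : G,
      ‖E x g * α g (E y h) * α (g * h * k⁻¹) (star (E z k)) * v (g * h * k⁻¹)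
        - E x g * v g * (E y h * v h) * (star (v k) * star (E z k))‖ ≤ C := by
    intro g h k
    set s : G := g * h * k⁻¹ with hsdef
    have hident : E x g * v g * (E y h * v h) * (star (v k) * star (E z k)) =
        E x g * (v g * E y h * star (v g)) * (v s * star (E z k) * star (v s)) * v s := by
      simp only [hsdef, hv_star, mul_assoc, hv_comp, ← hv_mul, hv_one, one_mul, mul_one,
        inv_mul_cancel_left, mul_inv_cancel_left, inv_mul_cancel, mul_inv_cancel]
    rw [hident]
    set Q : A := α g (E y h) with hQdef
    set Q' : A := v g * E y h * star (v g) with hQ'def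
    set R : A := α s (star (E z k)) with hRdef
    set R' : A := v s * star (E z k) * star (v s) with hR'def
    have hfac : E x g * Q * R * v s - E x g * Q' * R' * v s
        = (E x g * ((Q - Q') * R + Q' * (R - R'))) * v s := by noncomm_ring
    rw [hfac]
    have hQQ' : ‖Q - Q'‖ ≤ ε' := le_of_lt (hw' g (E y h) (hmem₁ y hy h))
    have hRR' : ‖R - R'‖ ≤ ε' := le_of_lt (hw' s (star (E z k)) (hmem₂ z hz k))
    have hQ'n : ‖Q'‖ ≤ M := by
      calc ‖Q'‖ ≤ ‖v g * E y h‖ * ‖star (v g)‖ := norm_mul_le _ _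
        _ ≤ ‖v g‖ * ‖E y h‖ * ‖star (v g)‖ :=
            mul_le_mul_of_nonneg_right (norm_mul_le _ _) (norm_nonneg _)
        _ ≤ 1 * M * 1 := by
            have h1 : ‖E y h‖ ≤ M := le_trans (hEle y h) (hMb y hy)
            have h2 : ‖star (v g)‖ ≤ 1 := by rw [norm_star]; exact hv1 g
            exact mul_le_mul (mul_le_mul (hv1 g) h1 (norm_nonneg _) zero_le_one) h2
              (norm_nonneg _) (mul_nonneg zero_le_one hM0)
        _ = M := by ring
    have hR'n : ‖R'‖ ≤ M := by
      calc ‖R'‖ ≤ ‖v s * star (E z k)‖ * ‖star (v s)‖ := norm_mul_le _ _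
        _ ≤ ‖v s‖ * ‖star (E z k)‖ * ‖star (v s)‖ :=
            mul_le_mul_of_nonneg_right (norm_mul_le _ _) (norm_nonneg _)
        _ ≤ 1 * M * 1 := by
            have h1 : ‖star (E z k)‖ ≤ M := by
              rw [norm_star]; exact le_trans (hEle z k) (hMb z hz)
            have h2 : ‖star (v s)‖ ≤ 1 := by rw [norm_star]; exact hv1 s
            exact mul_le_mul (mul_le_mul (hv1 s) h1 (norm_nonneg _) zero_le_one) h2
              (norm_nonneg _) (mul_nonneg zero_le_one hM0)
        _ = M := by ring
    have hRn : ‖R‖ ≤ M + ε' := by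
      calc ‖R‖ = ‖R' + (R - R')‖ := by rw [show R' + (R - R') = R from by abel]
        _ ≤ ‖R'‖ + ‖R - R'‖ := norm_add_le _ _
        _ ≤ M + ε' := add_le_add hR'n hRR'
    have hxg : ‖E x g‖ ≤ M := le_trans (hEle x g) (hMb x hx)
    calc ‖(E x g * ((Q - Q') * R + Q' * (R - R'))) * v s‖
        ≤ ‖E x g * ((Q - Q') * R + Q' * (R - R'))‖ * ‖v s‖ := norm_mul_le _ _
      _ ≤ ‖E x g * ((Q - Q') * R + Q' * (R - R'))‖ * 1 :=
          mul_le_mul_of_nonneg_left (hv1 s) (norm_nonneg _)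
      _ = ‖E x g * ((Q - Q') * R + Q' * (R - R'))‖ := mul_one _
      _ ≤ ‖E x g‖ * ‖(Q - Q') * R + Q' * (R - R')‖ := norm_mul_le _ _
      _ ≤ ‖E x g‖ * (‖(Q - Q') * R‖ + ‖Q' * (R - R')‖) :=
          mul_le_mul_of_nonneg_left (norm_add_le _ _) (norm_nonneg _)
      _ ≤ ‖E x g‖ * (‖Q - Q'‖ * ‖R‖ + ‖Q'‖ * ‖R - R'‖) :=
          mul_le_mul_of_nonneg_left (add_le_add (norm_mul_le _ _) (norm_mul_le _ _))
            (norm_nonneg _)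
      _ ≤ M * (ε' * (M + ε') + M * ε') := by
          gcongr <;> first
            | exact hxg | exact hQQ' | exact hRn | exact hQ'n | exact hRR'
            | positivity | exact norm_nonneg _
      _ = C := hCdef.symm
  have total : ‖ψ (x * y * star z) - ψ x * ψ y * star (ψ z)‖ ≤ n3 * C := by
    rw [hψL, hψR]
    simp only [← Finset.sum_sub_distrib]
    calc ‖∑ k : G, ∑ h : G, ∑ g : G,
          (E x g * α g (E y h) * α (g * h * k⁻¹) (star (E z k)) * v (g * h * k⁻¹)
            - E x g * v g * (E y h * v h) * (star (v k) * star (E z k)))‖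
        ≤ ∑ k : G, ∑ h : G, ∑ g : G,
          ‖E x g * α g (E y h) * α (g * h * k⁻¹) (star (E z k)) * v (g * h * k⁻¹)
            - E x g * v g * (E y h * v h) * (star (v k) * star (E z k))‖ := by
          refine le_trans (norm_sum_le _ _) (Finset.sum_le_sum fun k _ => ?_)
          refine le_trans (norm_sum_le _ _) (Finset.sum_le_sum fun h _ => ?_)
          exact norm_sum_le _ _
      _ ≤ ∑ _k : G, ∑ _h : G, ∑ _g : G, C := by
          refine Finset.sum_le_sum fun k _ => Finset.sum_le_sum fun h _ =>
            Finset.sum_le_sum fun g _ => key g h k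
      _ = n3 * C := by
          simp only [Finset.sum_const, Finset.card_univ, nsmul_eq_mul, hn3def]
          ring
  have hCbound : n3 * C ≤ ε / 2 := by
    have h1 : C ≤ 2 * (M + 1) ^ 2 * ε' := by
      rw [hCdef]
      nlinarith [mul_nonneg hM0 hε'pos.le, hε'pos.le, sq_nonneg (M + 1)]
    have h2 : ε' * (4 * n3 * (M + 1) ^ 2) ≤ ε := by
      rw [← le_div_iff₀ hD]; exact hε'leδ
    calc n3 * C ≤ n3 * (2 * (M + 1) ^ 2 * ε') := mul_le_mul_of_nonneg_left h1 hn3.le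
      _ = ε' * (4 * n3 * (M + 1) ^ 2) / 2 := by ring
      _ ≤ ε / 2 := by linarith
  calc ‖ψ (x * y * star z) - ψ x * ψ y * star (ψ z)‖ ≤ ε / 2 := le_trans total hCbound
    _ < ε := by linarith
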